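/- Zeroing the high-order blocks in the transformed frame and transforming back leaves the low-order blocks unchanged and produces the regularization block: the matrix M = Q⁻¹ (Q A Qᵀ − E) Q⁻ᵀ satisfies M_{kl} = A_{kl} whenever k ∈ {0, 1} or l ∈ {0, 1}, and M₂₂ = B₂₁ A₁₂ + A₂₁ B₂₁ᵀ − B₂₁ A₁₁ B₂₁ᵀ. -/

import Mathlib

open Matrix

/-- Assemble sixteen blocks into a 4×4 block matrix (grouped into quadrants). -/
def block4 {r₀ r₁ r₂ r₃ c₀ c₁ c₂ c₃ : Type*}
    (M₀₀ : Matrix r₀ c₀ ℝ) (M₀₁ : Matrix r₀ c₁ ℝ) (M₀₂ : Matrix r₀ c₂ ℝ) (M₀₃ : Matrix r₀ c₃ ℝ)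
    (M₁₀ : Matrix r₁ c₀ ℝ) (M₁₁ : Matrix r₁ c₁ ℝ) (M₁₂ : Matrix r₁ c₂ ℝ) (M₁₃ : Matrix r₁ c₃ ℝ)
    (M₂₀ : Matrix r₂ c₀ ℝ) (M₂₁ : Matrix r₂ c₁ ℝ) (M₂₂ : Matrix r₂ c₂ ℝ) (M₂₃ : Matrix r₂ c₃ ℝ)
    (M₃₀ : Matrix r₃ c₀ ℝ) (M₃₁ : Matrix r₃ c₁ ℝ) (M₃₂ : Matrix r₃ c₂ ℝ) (M₃₃ : Matrix r₃ c₃ ℝ) :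
    Matrix ((r₀ ⊕ r₁) ⊕ (r₂ ⊕ r₃)) ((c₀ ⊕ c₁) ⊕ (c₂ ⊕ c₃)) ℝ :=
  Matrix.fromBlocks (Matrix.fromBlocks M₀₀ M₀₁ M₁₀ M₁₁) (Matrix.fromBlocks M₀₂ M₀₃ M₁₂ M₁₃)
    (Matrix.fromBlocks M₂₀ M₂₁ M₃₀ M₃₁) (Matrix.fromBlocks M₂₂ M₂₃ M₃₂ M₃₃)

/-- Zeroing the high-order blocks of `Q A Qᵀ` and transforming
back leaves the low-order blocks unchanged and produces the regularization
block: `M = Q⁻¹ (Q A Qᵀ − E) Q⁻ᵀ` agrees with `A` on every block `(k, l)` with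
`k ∈ {0,1}` or `l ∈ {0,1}`, and its `(2,2)` block equals
`B₂₁ A₁₂ + A₂₁ B₂₁ᵀ − B₂₁ A₁₁ B₂₁ᵀ`. -/
theorem regularization_block_structure
    {n₀ n₁ n₂ n₃ : ℕ} (hn₀ : 0 < n₀) (hn₁ : 0 < n₁) (hn₂ : 0 < n₂) (hn₃ : 0 < n₃)
    (A₀₀ : Matrix (Fin n₀) (Fin n₀) ℝ) (A₀₁ : Matrix (Fin n₀) (Fin n₁) ℝ)
    (A₀₂ : Matrix (Fin n₀) (Fin n₂) ℝ) (A₀₃ : Matrix (Fin n₀) (Fin n₃) ℝ)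
    (A₁₀ : Matrix (Fin n₁) (Fin n₀) ℝ) (A₁₁ : Matrix (Fin n₁) (Fin n₁) ℝ)
    (A₁₂ : Matrix (Fin n₁) (Fin n₂) ℝ) (A₁₃ : Matrix (Fin n₁) (Fin n₃) ℝ)
    (A₂₀ : Matrix (Fin n₂) (Fin n₀) ℝ) (A₂₁ : Matrix (Fin n₂) (Fin n₁) ℝ)
    (A₂₂ : Matrix (Fin n₂) (Fin n₂) ℝ) (A₂₃ : Matrix (Fin n₂) (Fin n₃) ℝ)
    (A₃₀ : Matrix (Fin n₃) (Fin n₀) ℝ) (A₃₁ : Matrix (Fin n₃) (Fin n₁) ℝ)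
    (A₃₂ : Matrix (Fin n₃) (Fin n₂) ℝ) (A₃₃ : Matrix (Fin n₃) (Fin n₃) ℝ)
    (B₂₁ : Matrix (Fin n₂) (Fin n₁) ℝ) (B₃₁ : Matrix (Fin n₃) (Fin n₁) ℝ)
    (B₃₂ : Matrix (Fin n₃) (Fin n₂) ℝ)
    (A : Matrix ((Fin n₀ ⊕ Fin n₁) ⊕ (Fin n₂ ⊕ Fin n₃))
      ((Fin n₀ ⊕ Fin n₁) ⊕ (Fin n₂ ⊕ Fin n₃)) ℝ)
    (hA : A = block4 A₀₀ A₀₁ A₀₂ A₀₃ A₁₀ A₁₁ A₁₂ A₁₃ A₂₀ A₂₁ A₂₂ A₂₃ A₃₀ A₃₁ A₃₂ A₃₃)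
    (Q : Matrix ((Fin n₀ ⊕ Fin n₁) ⊕ (Fin n₂ ⊕ Fin n₃))
      ((Fin n₀ ⊕ Fin n₁) ⊕ (Fin n₂ ⊕ Fin n₃)) ℝ)
    (hQ : Q = block4 1 0 0 0 0 1 0 0 0 0 1 0 0 0 (-B₃₂) 1 *
      block4 1 0 0 0 0 1 0 0 0 (-B₂₁) 1 0 0 (-B₃₁) 0 1)
    (E : Matrix ((Fin n₀ ⊕ Fin n₁) ⊕ (Fin n₂ ⊕ Fin n₃))
      ((Fin n₀ ⊕ Fin n₁) ⊕ (Fin n₂ ⊕ Fin n₃)) ℝ)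
    (hE : E = Matrix.fromBlocks 0 0 0 ((Q * A * Qᵀ).toBlocks₂₂))
    (M : Matrix ((Fin n₀ ⊕ Fin n₁) ⊕ (Fin n₂ ⊕ Fin n₃))
      ((Fin n₀ ⊕ Fin n₁) ⊕ (Fin n₂ ⊕ Fin n₃)) ℝ)
    (hM : M = Q⁻¹ * (Q * A * Qᵀ - E) * (Qᵀ)⁻¹) :
    M.toBlocks₁₁ = Matrix.fromBlocks A₀₀ A₀₁ A₁₀ A₁₁ ∧
      M.toBlocks₁₂ = Matrix.fromBlocks A₀₂ A₀₃ A₁₂ A₁₃ ∧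
      M.toBlocks₂₁ = Matrix.fromBlocks A₂₀ A₂₁ A₃₀ A₃₁ ∧
      (M.toBlocks₂₂).toBlocks₁₁ = B₂₁ * A₁₂ + A₂₁ * B₂₁ᵀ - B₂₁ * A₁₁ * B₂₁ᵀ := by
  set Qi : Matrix ((Fin n₀ ⊕ Fin n₁) ⊕ (Fin n₂ ⊕ Fin n₃))
      ((Fin n₀ ⊕ Fin n₁) ⊕ (Fin n₂ ⊕ Fin n₃)) ℝ :=
    block4 1 0 0 0 0 1 0 0 0 B₂₁ 1 0 0 B₃₁ B₃₂ 1 with hQidef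
  have hright : Q * Qi = 1 := by
    rw [hQ, hQidef]
    simp only [block4, Matrix.fromBlocks_multiply, Matrix.fromBlocks_add,
      Matrix.fromBlocks_neg, Matrix.mul_one, Matrix.one_mul,
      Matrix.mul_zero, Matrix.zero_mul, add_zero, zero_add, Matrix.fromBlocks_zero,
      Matrix.mul_add, Matrix.add_mul, Matrix.mul_neg, Matrix.neg_mul, neg_neg,
      Matrix.mul_assoc, ← Matrix.fromBlocks_one, Matrix.fromBlocks_inj]
    repeat' apply And.intro
    all_goals (first | rfl | abel | skip)
    all_goals (try exact Matrix.fromBlocks_zero)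
    all_goals (first | rfl | trivial | abel)
  have hleft : Qi * Q = 1 := by
    rw [hQ, hQidef]
    simp only [block4, Matrix.fromBlocks_multiply, Matrix.fromBlocks_add,
      Matrix.fromBlocks_neg, Matrix.mul_one, Matrix.one_mul,
      Matrix.mul_zero, Matrix.zero_mul, add_zero, zero_add, Matrix.fromBlocks_zero,
      Matrix.mul_add, Matrix.add_mul, Matrix.mul_neg, Matrix.neg_mul, neg_neg,
      Matrix.mul_assoc, ← Matrix.fromBlocks_one, Matrix.fromBlocks_inj]
    repeat' apply And.intro
    all_goals (first | rfl | abel | skip)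
    all_goals (try exact Matrix.fromBlocks_zero)
    all_goals (first | rfl | trivial | abel)
  have hQinv : Q⁻¹ = Qi := Matrix.inv_eq_right_inv hright
  have hQTinv : (Qᵀ)⁻¹ = Qiᵀ := by
    refine Matrix.inv_eq_right_inv ?_
    rw [← Matrix.transpose_mul, hleft, Matrix.transpose_one]
  rw [hQinv, hQTinv] at hM
  subst hE hA hQ hM
  refine ⟨?_, ?_, ?_, ?_⟩ <;>
    simp only [hQidef, block4, sub_eq_add_neg, Matrix.fromBlocks_multiply,
      Matrix.fromBlocks_transpose, Matrix.fromBlocks_neg, Matrix.fromBlocks_add,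
      Matrix.toBlocks_fromBlocks₁₁, Matrix.toBlocks_fromBlocks₁₂,
      Matrix.toBlocks_fromBlocks₂₁, Matrix.toBlocks_fromBlocks₂₂,
      Matrix.mul_one, Matrix.one_mul, Matrix.mul_zero, Matrix.zero_mul,
      Matrix.transpose_zero, Matrix.transpose_one, Matrix.transpose_neg,
      Matrix.transpose_add, Matrix.transpose_mul,
      add_zero, zero_add, neg_zero, Matrix.mul_neg, Matrix.neg_mul, neg_neg,
      Matrix.mul_add, Matrix.add_mul, Matrix.mul_assoc, Matrix.fromBlocks_zero,
      Matrix.fromBlocks_inj]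
  repeat' apply And.intro
  all_goals (first | rfl | abel | skip)
  all_goals (try exact Matrix.fromBlocks_zero)
  all_goals (first | rfl | abel)
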